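/- The XOR cellular automaton f on {0,1}^ℤ defined by f(x)_i = x_i + x_{i+1} mod 2 is surjective but not injective, and hence not Von Neumann regular in the monoid of cellular automata on {0,1}^ℤ. -/

import Mathlib

/-- The shift map on `ℤ → Bool`. -/
private def shiftCA : (ℤ → Bool) → (ℤ → Bool) := fun x i => x (i + 1)

private lemma shiftCA_iter (p : ℕ) (x : ℤ → Bool) (i : ℤ) :
    shiftCA^[p] x i = x (i + p) := by
  induction p generalizing x with
  | zero => simp
  | succ n ih =>
    rw [Function.iterate_succ_apply, ih]
    show x ((i + n) + 1) = x (i + (n + 1 : ℕ))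
    congr 1
    push_cast
    ring

private lemma per_shift (p : ℕ) (x : ℤ → Bool) (hx : ∀ i, x (i + p) = x i) :
    ∀ (k : ℤ) (j : ℤ), x (j + p * k) = x j := by
  intro k
  induction k using Int.induction_on with
  | zero => simp
  | succ k ih =>
    intro j
    have h1 : j + (p : ℤ) * (k + 1) = (j + p * k) + p := by ring
    rw [h1, hx, ih]
  | pred k ih =>
    intro j
    have h1 : (j + (p : ℤ) * (-k - 1)) + p = j + p * (-k) := by ring
    have := hx (j + (p : ℤ) * (-k - 1))
    rw [h1] at this
    rw [← this, ih]

private lemma per_emod (p : ℕ) (hp : 0 < p) (x : ℤ → Bool) (hx : ∀ i, x (i + p) = x i)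
    (i : ℤ) : x i = x (i % p) := by
  have h := per_shift p x hx (i / p) (i % p)
  rw [Int.emod_add_mul_ediv i p] at h
  exact h

/-- solutions for surjectivity, nonnegative side -/
private def Fpos (y : ℤ → Bool) : ℕ → Bool
  | 0 => false
  | n + 1 => xor (Fpos y n) (y n)

/-- solutions for surjectivity, negative side: `Gneg y n = sol y (-(n+1))` -/
private def Gneg (y : ℤ → Bool) : ℕ → Bool
  | 0 => y (-1)
  | n + 1 => xor (Gneg y n) (y (Int.negSucc (n + 1)))

private def sol (y : ℤ → Bool) : ℤ → Bool
  | Int.ofNat n => Fpos y n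
  | Int.negSucc n => Gneg y n

theorem stmt_8
    (f : (ℤ → Bool) → (ℤ → Bool))
    (hf : ∀ x i, f x i = xor (x i) (x (i + 1))) :
    Function.Surjective f ∧ ¬ Function.Injective f ∧
    ¬ ∃ g : (ℤ → Bool) → (ℤ → Bool),
        Continuous g ∧
        (∀ x : ℤ → Bool, g (fun i => x (i + 1)) = fun i => g x (i + 1)) ∧
        ∀ x, f (g (f x)) = f x := by
  -- Surjectivity
  have fsurj : Function.Surjective f := by
    intro y
    refine ⟨sol y, funext fun i => ?_⟩
    rw [hf]
    match i with
    | Int.ofNat n =>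
      have h1 : (Int.ofNat n) + 1 = Int.ofNat (n + 1) := by rfl
      rw [h1]
      show xor (Fpos y n) (Fpos y (n + 1)) = y (Int.ofNat n)
      show xor (Fpos y n) (xor (Fpos y n) (y n)) = y (Int.ofNat n)
      have : y (Int.ofNat n) = y (n : ℤ) := rfl
      rw [this]
      cases Fpos y n <;> cases y (n : ℤ) <;> rfl
    | Int.negSucc 0 =>
      have h1 : (Int.negSucc 0) + 1 = Int.ofNat 0 := by decide
      rw [h1]
      show xor (Gneg y 0) (Fpos y 0) = y (Int.negSucc 0)
      show xor (y (-1)) false = y (Int.negSucc 0)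
      have : y (Int.negSucc 0) = y (-1) := rfl
      rw [this]
      cases y (-1) <;> rfl
    | Int.negSucc (n + 1) =>
      have h1 : (Int.negSucc (n + 1)) + 1 = Int.negSucc n := by
        rw [Int.negSucc_eq, Int.negSucc_eq]; push_cast; ring
      rw [h1]
      show xor (Gneg y (n + 1)) (Gneg y n) = y (Int.negSucc (n + 1))
      show xor (xor (Gneg y n) (y (Int.negSucc (n + 1)))) (Gneg y n)
          = y (Int.negSucc (n + 1))
      cases Gneg y n <;> cases y (Int.negSucc (n + 1)) <;> rfl
  -- Non-injectivity
  have fninj : ¬ Function.Injective f := by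
    intro hinj
    have h : f (fun _ => false) = f (fun _ => true) := by
      funext i
      rw [hf, hf]
      decide
    have := congrFun (hinj h) 0
    simp at this
  refine ⟨fsurj, fninj, ?_⟩
  rintro ⟨g, hgc, hgs, hgfg⟩
  -- f ∘ g = id
  have hfg : ∀ y, f (g y) = y := by
    intro y
    obtain ⟨x, rfl⟩ := fsurj y
    exact hgfg x
  have ginj : Function.Injective g := fun a b h => by
    rw [← hfg a, h, hfg]
  -- g commutes with iterates of the shift
  have gs : ∀ x, g (shiftCA x) = shiftCA (g x) := hgs
  have gsp : ∀ (p : ℕ) (x), g (shiftCA^[p] x) = shiftCA^[p] (g x) := by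
    intro p
    induction p with
    | zero => intro x; simp
    | succ n ih =>
      intro x
      rw [Function.iterate_succ_apply, Function.iterate_succ_apply, ih, gs]
  -- range of g is closed
  have hK : IsClosed (Set.range g) := (isCompact_range hgc).isClosed
  -- each periodic point is in the range of g
  have hper : ∀ (p : ℕ), 0 < p → ∀ x : ℤ → Bool, shiftCA^[p] x = x → x ∈ Set.range g := by
    intro p hp x hx
    set P : Set (ℤ → Bool) := {z | shiftCA^[p] z = z} with hP
    have hPper : ∀ z ∈ P, ∀ i, z (i + p) = z i := by
      intro z hz i
      have := congrFun hz i
      rw [shiftCA_iter] at this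
      exact this
    have hfin : P.Finite := by
      have : Finite {z : ℤ → Bool // z ∈ P} := by
        refine Finite.of_injective (fun z (j : Fin p) => z.1 (j : ℤ)) ?_
        rintro ⟨a, ha⟩ ⟨b, hb⟩ hab
        ext1
        funext i
        have key : ∀ r : Fin p, a (r : ℤ) = b (r : ℤ) := fun r => congrFun hab r
        have hamod := per_emod p hp a (hPper a ha) i
        have hbmod := per_emod p hp b (hPper b hb) i
        have h0 : (0 : ℤ) ≤ i % p := Int.emod_nonneg i (by positivity)
        have h1 : i % p < p := Int.emod_lt_of_pos i (by exact_mod_cast hp)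
        have h2 : ((i % p).toNat : ℤ) = i % p := Int.toNat_of_nonneg h0
        have h3 : (i % p).toNat < p := by omega
        have := key ⟨(i % p).toNat, h3⟩
        simp only [h2] at this
        show a i = b i
        rw [hamod, hbmod, this]
      rwa [Set.finite_coe_iff] at this
    have hmt : Set.MapsTo g P P := by
      intro z hz
      show shiftCA^[p] (g z) = g z
      rw [← gsp, hz]
    have hso : Set.SurjOn g P P :=
      ((hfin.injOn_iff_bijOn_of_mapsTo hmt).1 (Set.injOn_of_injective ginj)).2.2
    obtain ⟨w, _, hw⟩ := hso hx
    exact ⟨w, hw⟩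
  -- periodic points are dense, so g is surjective
  have gsurj : Function.Surjective g := by
    intro x
    -- approximating periodic sequences
    have happ : ∀ n : ℕ, ∃ y : ℤ → Bool,
        shiftCA^[2 * n + 1] y = y ∧ ∀ i : ℤ, |i| ≤ n → y i = x i := by
      intro n
      set p : ℕ := 2 * n + 1 with hpdef
      refine ⟨fun i => x ((i + n) % p - n), ?_, ?_⟩
      · funext i
        rw [shiftCA_iter]
        congr 2
        have : i + (p : ℤ) + n = (i + n) + p * 1 := by push_cast; ring
        rw [this, Int.add_mul_emod_self_left]
      · intro i hi
        have h0 : (0 : ℤ) ≤ i + n := by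
          rw [abs_le] at hi; omega
        have h1 : i + (n : ℤ) < p := by
          rw [abs_le] at hi; push_cast; omega
        simp only
        rw [Int.emod_eq_of_lt h0 h1]
        congr 1
        ring
    have hx : x ∈ closure (Set.range g) := by
      choose y hy1 hy2 using happ
      refine mem_closure_of_tendsto (f := y) (b := Filter.atTop) ?_ ?_
      · rw [tendsto_pi_nhds]
        intro i
        refine Filter.Tendsto.congr' ?_ (tendsto_const_nhds : Filter.Tendsto (fun _ : ℕ => x i) Filter.atTop (nhds (x i)))
        filter_upwards [Filter.eventually_ge_atTop i.natAbs] with n hn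
        exact (hy2 n i (by rw [Int.abs_eq_natAbs]; exact_mod_cast hn)).symm
      · filter_upwards with n
        exact hper (2 * n + 1) (by omega) (y n) (hy1 n)
    rwa [hK.closure_eq] at hx
  -- g surjective + f ∘ g = id ⇒ f injective, contradiction
  apply fninj
  intro a b hab
  obtain ⟨a', rfl⟩ := gsurj a
  obtain ⟨b', rfl⟩ := gsurj b
  rw [hfg, hfg] at hab
  rw [hab]
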